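/- If $k_1$ and $k_2$ are both increasing functions on $[-1,1]$, then their spherical convolution $k_1 * k_2$, defined by $(k_1 * k_2)(t) = \int_{S^n} k_1(x\cdot y) k_2(y\cdot z)\, d\mu(y)$ for any $x,z \in S^n$ with $x\cdot z = t$, is also an increasing function on $[-1,1]$. -/

import Mathlib

open MeasureTheory Metric Set
open scoped RealInnerProductSpace

noncomputable section

open scoped NNReal ENNReal

set_option maxHeartbeats 1000000

namespace SphericalConvAux

/-! ### Finiteness of the Hausdorff measure of the sphere -/

def gmap (n : ℕ) (i : Fin (n+1)) (v : EuclideanSpace ℝ (Fin n)) :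
    EuclideanSpace ℝ (Fin (n+1)) :=
  WithLp.toLp 2 (Fin.insertNth i (Real.sqrt (1 - ‖v‖^2)) v.ofLp)

lemma gmap_lip (n : ℕ) (i : Fin (n+1)) :
    LipschitzOnWith (n+2 : ℝ≥0) (gmap n i)
      (closedBall (0 : EuclideanSpace ℝ (Fin n)) (Real.sqrt ((n:ℝ)/(n+1)))) := by
  apply LipschitzOnWith.of_dist_le_mul
  intro v hv w hw
  have hn1 : (0:ℝ) < (n:ℝ)+1 := by positivity
  have hfield : (n:ℝ)/((n:ℝ)+1) * ((n:ℝ)+1) = (n:ℝ) := div_mul_cancel₀ _ (ne_of_gt hn1)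
  have hr2 : (Real.sqrt ((n:ℝ)/(n+1)))^2 = (n:ℝ)/(n+1) :=
    Real.sq_sqrt (by positivity)
  have hb : ∀ u ∈ closedBall (0 : EuclideanSpace ℝ (Fin n)) (Real.sqrt ((n:ℝ)/(n+1))),
      ‖u‖^2 ≤ (n:ℝ)/(n+1) ∧ ‖u‖ ≤ 1 := by
    intro u hu
    have h1 : ‖u‖ ≤ Real.sqrt ((n:ℝ)/(n+1)) := mem_closedBall_zero_iff.mp hu
    have h2 : ‖u‖^2 ≤ (n:ℝ)/(n+1) := by
      rw [← hr2]; exact pow_le_pow_left₀ (norm_nonneg _) h1 2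
    have h3 : Real.sqrt ((n:ℝ)/(n+1)) ≤ 1 := by
      apply Real.sqrt_le_one.mpr
      rw [div_le_one hn1]; linarith
    exact ⟨h2, h1.trans h3⟩
  obtain ⟨hv2, hv1⟩ := hb v hv
  obtain ⟨hw2, hw1⟩ := hb w hw
  set sa := Real.sqrt (1 - ‖v‖^2) with hsa_def
  set sb := Real.sqrt (1 - ‖w‖^2) with hsb_def
  have hav : (1:ℝ)/(n+1) ≤ 1 - ‖v‖^2 := by
    rw [div_le_iff₀ hn1]; nlinarith
  have haw : (1:ℝ)/(n+1) ≤ 1 - ‖w‖^2 := by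
    rw [div_le_iff₀ hn1]; nlinarith
  set s0 := Real.sqrt (1/((n:ℝ)+1)) with hs0_def
  have hs0 : s0^2 = 1/((n:ℝ)+1) := Real.sq_sqrt (by positivity)
  have hs0pos : 0 < s0 := Real.sqrt_pos.mpr (by positivity)
  have hs0le1 : s0 ≤ 1 := by
    apply Real.sqrt_le_one.mpr
    rw [div_le_one hn1]; linarith
  have hsav : s0 ≤ sa := Real.sqrt_le_sqrt hav
  have hsaw : s0 ≤ sb := Real.sqrt_le_sqrt haw
  have hsa2 : sa^2 = 1 - ‖v‖^2 := Real.sq_sqrt (by nlinarith)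
  have hsb2 : sb^2 = 1 - ‖w‖^2 := Real.sq_sqrt (by nlinarith)
  have hdd : |‖w‖ - ‖v‖| ≤ dist v w := by
    rw [dist_eq_norm]
    exact (abs_sub_comm (‖w‖) (‖v‖)).le.trans (abs_norm_sub_norm_le v w)
  have hdist0 : (0:ℝ) ≤ dist v w := dist_nonneg
  have habs : |sa - sb| * (sa + sb) = |(‖w‖ - ‖v‖) * (‖w‖ + ‖v‖)| := by
    rw [← abs_of_nonneg (by positivity : (0:ℝ) ≤ sa + sb), ← abs_mul]
    congr 1
    nlinarith [hsa2, hsb2]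
  have hphi : dist sa sb ≤ ((n:ℝ)+1) * dist v w := by
    rw [Real.dist_eq]
    have h1 : |(‖w‖ - ‖v‖) * (‖w‖ + ‖v‖)| ≤ 2 * dist v w := by
      rw [abs_mul, abs_of_nonneg (by positivity : (0:ℝ) ≤ ‖w‖ + ‖v‖)]
      nlinarith [abs_nonneg (‖w‖ - ‖v‖)]
    have h2 : |sa - sb| * (2 * s0) ≤ 2 * dist v w := by
      calc |sa - sb| * (2 * s0) ≤ |sa - sb| * (sa + sb) := by
            apply mul_le_mul_of_nonneg_left (by linarith) (abs_nonneg _)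
        _ ≤ 2 * dist v w := by rw [habs]; exact h1
    have h3 : ((n:ℝ)+1) * s0^2 = 1 := by rw [hs0]; field_simp
    have hks : 1 ≤ ((n:ℝ)+1) * s0 := by nlinarith [hs0pos, hs0le1]
    nlinarith [mul_le_mul_of_nonneg_left h2 (le_of_lt hn1),
      mul_le_mul_of_nonneg_right hks (abs_nonneg (sa - sb)),
      abs_nonneg (sa - sb), hs0pos]
  have hdg : dist (gmap n i v) (gmap n i w)
      = Real.sqrt (dist sa sb ^2 + ∑ j, dist (v j) (w j)^2) := by
    rw [EuclideanSpace.dist_eq, Fin.sum_univ_succAbove _ i]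
    congr 2
    · simp [gmap, Fin.insertNth_apply_same]
      rfl
    · apply Finset.sum_congr rfl
      intro j _
      simp [gmap, Fin.insertNth_apply_succAbove]
  have hvw : dist v w = Real.sqrt (∑ j, dist (v j) (w j)^2) := EuclideanSpace.dist_eq v w
  have hsum : ∑ j, dist (v j) (w j)^2 = dist v w ^ 2 := by
    rw [hvw, Real.sq_sqrt]
    positivity
  rw [hdg, hsum]
  have hfin : Real.sqrt (dist sa sb ^2 + dist v w ^2) ≤ dist sa sb + dist v w := by
    have h4 : dist sa sb ^2 + dist v w ^2 ≤ (dist sa sb + dist v w)^2 := by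
      nlinarith [dist_nonneg (x := sa) (y := sb), hdist0]
    calc Real.sqrt (dist sa sb ^2 + dist v w ^2) ≤ Real.sqrt ((dist sa sb + dist v w)^2) :=
          Real.sqrt_le_sqrt h4
      _ = dist sa sb + dist v w := Real.sqrt_sq (by positivity)
  refine hfin.trans ?_
  push_cast
  linarith [hphi]

lemma cap_mem (n : ℕ) (y : EuclideanSpace ℝ (Fin (n+1))) (hy : ‖y‖ = 1) (i : Fin (n+1))
    (hi : 1/((n:ℝ)+1) ≤ (y i)^2) (hpos : 0 ≤ y i) :
    y ∈ gmap n i '' (closedBall (0 : EuclideanSpace ℝ (Fin n)) (Real.sqrt ((n:ℝ)/(n+1)))) := by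
  have hn1 : (0:ℝ) < (n:ℝ)+1 := by positivity
  have hsum : ∑ j, (y j)^2 = 1 := by
    have h := EuclideanSpace.norm_eq y
    rw [hy] at h
    have h2 : Real.sqrt (∑ j, ‖y j‖^2) = 1 := h.symm
    have h3 : ∑ j, ‖y j‖^2 = 1 := by
      rwa [Real.sqrt_eq_one] at h2
    simpa [Real.norm_eq_abs, sq_abs] using h3
  set v : EuclideanSpace ℝ (Fin n) := WithLp.toLp 2 (Fin.removeNth i y.ofLp) with hv_def
  have hsum' : (y i)^2 + ∑ j, (v j)^2 = 1 := by
    rw [← hsum, Fin.sum_univ_succAbove _ i]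
    rfl
  have hnv : ‖v‖^2 = 1 - (y i)^2 := by
    rw [EuclideanSpace.norm_eq, Real.sq_sqrt (by positivity)]
    simp only [Real.norm_eq_abs, sq_abs]
    linarith
  refine ⟨v, ?_, ?_⟩
  · rw [mem_closedBall_zero_iff]
    have hi' : 1 ≤ (y i)^2 * ((n:ℝ)+1) := by
      rwa [div_le_iff₀ hn1] at hi
    have h1 : ‖v‖^2 ≤ (n:ℝ)/(n+1) := by
      rw [hnv, le_div_iff₀ hn1]
      nlinarith
    calc ‖v‖ = Real.sqrt (‖v‖^2) := (Real.sqrt_sq (norm_nonneg v)).symm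
      _ ≤ Real.sqrt ((n:ℝ)/(n+1)) := Real.sqrt_le_sqrt h1
  · show WithLp.toLp 2 (Fin.insertNth i (Real.sqrt (1 - ‖v‖^2)) v.ofLp) = y
    have h2 : Real.sqrt (1 - ‖v‖^2) = y i := by
      rw [hnv]
      have h3 : 1 - (1 - (y i)^2) = (y i)^2 := by ring
      rw [h3, Real.sqrt_sq hpos]
    rw [h2, hv_def]
    exact congrArg (WithLp.toLp 2) (Fin.insertNth_self_removeNth i y.ofLp)

lemma sphere_cover (n : ℕ) :
    sphere (0 : EuclideanSpace ℝ (Fin (n+1))) 1 ⊆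
      ⋃ i : Fin (n+1),
        (gmap n i '' (closedBall 0 (Real.sqrt ((n:ℝ)/(n+1)))) ∪
          (fun y => -y) '' (gmap n i '' (closedBall 0 (Real.sqrt ((n:ℝ)/(n+1)))))) := by
  intro y hy
  have hy1 : ‖y‖ = 1 := by simpa [mem_sphere_iff_norm] using hy
  have hn1 : (0:ℝ) < (n:ℝ)+1 := by positivity
  have hsum : ∑ j, (y j)^2 = 1 := by
    have h := EuclideanSpace.norm_eq y
    rw [hy1] at h
    have h3 : ∑ j, ‖y j‖^2 = 1 := by rwa [eq_comm, Real.sqrt_eq_one] at h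
    simpa [Real.norm_eq_abs, sq_abs] using h3
  have hex : ∃ i, 1/((n:ℝ)+1) ≤ (y i)^2 := by
    by_contra hcon
    push_neg at hcon
    have hlt : ∑ j, (y j)^2 < ∑ _j : Fin (n+1), 1/((n:ℝ)+1) :=
      Finset.sum_lt_sum_of_nonempty Finset.univ_nonempty (fun j _ => hcon j)
    rw [Finset.sum_const, Finset.card_univ, Fintype.card_fin] at hlt
    have hone : ((n:ℝ)+1) * (1/((n:ℝ)+1)) = 1 := by field_simp
    rw [hsum] at hlt
    rw [nsmul_eq_mul] at hlt
    push_cast at hlt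
    linarith
  obtain ⟨i, hi⟩ := hex
  apply mem_iUnion.mpr
  refine ⟨i, ?_⟩
  rcases le_or_gt 0 (y i) with hpos | hneg
  · exact Or.inl (cap_mem n y hy1 i hi hpos)
  · refine Or.inr ⟨-y, ?_, by simp⟩
    have hyn : ‖(-y : EuclideanSpace ℝ (Fin (n+1)))‖ = 1 := by rwa [norm_neg]
    have hni : (-y) i = -(y i) := rfl
    apply cap_mem n (-y) hyn i
    · rw [hni]; rwa [neg_sq]
    · rw [hni]; linarith

lemma sphere_hmeas_lt_top (n : ℕ) :
    μH[(n:ℝ)] (sphere (0 : EuclideanSpace ℝ (Fin (n+1))) 1) < ⊤ := by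
  haveI : IsFiniteMeasureOnCompacts (μH[(n:ℝ)] : Measure (EuclideanSpace ℝ (Fin n))) := by
    have h : ((n:ℝ)) = ((Module.finrank ℝ (EuclideanSpace ℝ (Fin n)) : ℕ) : ℝ) := by simp
    rw [h]; infer_instance
  set B := closedBall (0 : EuclideanSpace ℝ (Fin n)) (Real.sqrt ((n:ℝ)/(n+1))) with hB_def
  have hB : μH[(n:ℝ)] B < ⊤ := (isCompact_closedBall _ _).measure_lt_top
  have hcap : ∀ i : Fin (n+1), μH[(n:ℝ)] (gmap n i '' B) < ⊤ := by
    intro i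
    calc μH[(n:ℝ)] (gmap n i '' B) ≤ ((n+2 : ℝ≥0) : ℝ≥0∞) ^ (n:ℝ) * μH[(n:ℝ)] B :=
        (gmap_lip n i).hausdorffMeasure_image_le (by positivity)
      _ < ⊤ := ENNReal.mul_lt_top
          (ENNReal.rpow_lt_top_of_nonneg (by positivity) ENNReal.coe_ne_top) hB
  have hnegiso : Isometry (fun y : EuclideanSpace ℝ (Fin (n+1)) => -y) :=
    fun a b => edist_neg_neg a b
  have hneg : ∀ s : Set (EuclideanSpace ℝ (Fin (n+1))),
      μH[(n:ℝ)] ((fun y => -y) '' s) = μH[(n:ℝ)] s := fun s =>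
    hnegiso.hausdorffMeasure_image (Or.inr neg_surjective) s
  refine lt_of_le_of_lt ((measure_mono (sphere_cover n)).trans (measure_iUnion_le _)) ?_
  rw [tsum_fintype]
  refine ENNReal.sum_lt_top.mpr (fun i _ => ?_)
  refine lt_of_le_of_lt (measure_union_le _ _) ?_
  exact ENNReal.add_lt_top.mpr ⟨hcap i, by rw [hneg]; exact hcap i⟩

/-! ### Invariance of the restricted measure under linear isometries -/

lemma sphere_preimage {m : ℕ} (R : EuclideanSpace ℝ (Fin m) ≃ₗᵢ[ℝ] EuclideanSpace ℝ (Fin m)) :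
    R ⁻¹' (sphere (0 : EuclideanSpace ℝ (Fin m)) 1) = sphere 0 1 := by
  ext y
  simp [mem_sphere_iff_norm]

lemma map_restrict {m : ℕ} (d : ℝ)
    (R : EuclideanSpace ℝ (Fin m) ≃ₗᵢ[ℝ] EuclideanSpace ℝ (Fin m)) :
    Measure.map R (μH[d].restrict (sphere 0 1)) = μH[d].restrict (sphere 0 1) := by
  have hmap : Measure.map R (μH[d] : Measure (EuclideanSpace ℝ (Fin m))) = μH[d] := by
    rw [R.isometry.map_hausdorffMeasure (Or.inr R.surjective), R.surjective.range_eq,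
      Measure.restrict_univ]
  have hms : MeasurableSet (sphere (0 : EuclideanSpace ℝ (Fin m)) 1) :=
    isClosed_sphere.measurableSet
  have h := Measure.restrict_map (μ := (μH[d] : Measure (EuclideanSpace ℝ (Fin m))))
    R.continuous.measurable hms
  rw [hmap, sphere_preimage] at h
  exact h.symm

lemma integral_comp_isometry {m : ℕ} (d : ℝ)
    (R : EuclideanSpace ℝ (Fin m) ≃ₗᵢ[ℝ] EuclideanSpace ℝ (Fin m))
    (f : EuclideanSpace ℝ (Fin m) → ℝ) :
    ∫ y in sphere (0 : EuclideanSpace ℝ (Fin m)) 1, f (R y) ∂μH[d]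
      = ∫ y in sphere (0 : EuclideanSpace ℝ (Fin m)) 1, f y ∂μH[d] := by
  have mp : MeasurePreserving R (μH[d].restrict (sphere 0 1))
      (μH[d].restrict (sphere 0 1)) := ⟨R.continuous.measurable, map_restrict d R⟩
  exact mp.integral_comp R.toHomeomorph.measurableEmbedding f

lemma inner_symm_right {m : ℕ}
    (R : EuclideanSpace ℝ (Fin m) ≃ₗᵢ[ℝ] EuclideanSpace ℝ (Fin m))
    (a b : EuclideanSpace ℝ (Fin m)) : ⟪a, R.symm b⟫ = ⟪R a, b⟫ := by
  rw [← R.inner_map_map a (R.symm b), R.apply_symm_apply]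

/-! ### Integrability -/

lemma integrable_prod (n : ℕ) (f g : ℝ → ℝ) (hf : Monotone f) (hg : Monotone g)
    (a b : EuclideanSpace ℝ (Fin (n+1))) :
    Integrable (fun y => f ⟪a, y⟫ * g ⟪y, b⟫)
      (μH[(n:ℝ)].restrict (sphere (0 : EuclideanSpace ℝ (Fin (n+1))) 1)) := by
  have hms : MeasurableSet (sphere (0 : EuclideanSpace ℝ (Fin (n+1))) 1) :=
    isClosed_sphere.measurableSet
  haveI : IsFiniteMeasure (μH[(n:ℝ)].restrict (sphere (0 : EuclideanSpace ℝ (Fin (n+1))) 1)) := by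
    constructor
    rw [Measure.restrict_apply_univ]
    exact sphere_hmeas_lt_top n
  have hm1 : Measurable (fun y : EuclideanSpace ℝ (Fin (n+1)) => f ⟪a, y⟫) :=
    hf.measurable.comp (Continuous.measurable (continuous_const.inner continuous_id))
  have hm2 : Measurable (fun y : EuclideanSpace ℝ (Fin (n+1)) => g ⟪y, b⟫) :=
    hg.measurable.comp (Continuous.measurable (continuous_id.inner continuous_const))
  refine Integrable.mono' (g := fun _ => (max |f (-‖a‖)| |f ‖a‖|) * (max |g (-‖b‖)| |g ‖b‖|))
    (integrable_const _) ((hm1.mul hm2).aestronglyMeasurable) ?_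
  rw [ae_restrict_iff' hms]
  refine ae_of_all _ (fun y hy => ?_)
  have hy1 : ‖y‖ = 1 := by simpa [mem_sphere_iff_norm] using hy
  have hb1 : |⟪a, y⟫| ≤ ‖a‖ := by
    have h := abs_real_inner_le_norm a y
    rwa [hy1, mul_one] at h
  have hb2 : |⟪y, b⟫| ≤ ‖b‖ := by
    have h := abs_real_inner_le_norm y b
    rwa [hy1, one_mul] at h
  have key : ∀ (h : ℝ → ℝ), Monotone h → ∀ t c : ℝ, |t| ≤ c → |h t| ≤ max |h (-c)| |h c| := by
    intro h hh t c htc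
    obtain ⟨h1, h2⟩ := abs_le.mp htc
    have l1 : h (-c) ≤ h t := hh h1
    have l2 : h t ≤ h c := hh h2
    rcases abs_cases (h t) with ⟨he, _⟩ | ⟨he, _⟩
    · rw [he]
      exact le_max_of_le_right (l2.trans (le_abs_self _))
    · rw [he]
      exact le_max_of_le_left (by linarith [neg_abs_le (h (-c))])
  rw [Real.norm_eq_abs, abs_mul]
  exact mul_le_mul (key f hf _ _ hb1) (key g hg _ _ hb2) (abs_nonneg _)
    (le_trans (abs_nonneg _) (key f hf _ _ hb1))

/-! ### The main inequality for a common point `x` -/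

lemma main_ineq (n : ℕ) (K₁ K₂ : ℝ → ℝ) (h₁ : Monotone K₁) (h₂ : Monotone K₂)
    (x z z'' : EuclideanSpace ℝ (Fin (n+1)))
    (hx : ‖x‖ = 1) (hz : ‖z‖ = 1) (hz'' : ‖z''‖ = 1)
    (ht : ⟪x, z⟫ ≤ ⟪x, z''⟫) :
    (∫ y in sphere (0 : EuclideanSpace ℝ (Fin (n+1))) 1, K₁ ⟪x, y⟫ * K₂ ⟪y, z⟫ ∂μH[(n:ℝ)]) ≤
      ∫ y in sphere (0 : EuclideanSpace ℝ (Fin (n+1))) 1, K₁ ⟪x, y⟫ * K₂ ⟪y, z''⟫ ∂μH[(n:ℝ)] := by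
  by_cases hzz : z = z''
  · rw [hzz]
  have hms : MeasurableSet (sphere (0 : EuclideanSpace ℝ (Fin (n+1))) 1) :=
    isClosed_sphere.measurableSet
  set σ := (Submodule.reflection ((ℝ ∙ (z - z''))ᗮ) :
    EuclideanSpace ℝ (Fin (n+1)) ≃ₗᵢ[ℝ] EuclideanSpace ℝ (Fin (n+1))) with hσdef
  have hσz : σ z = z'' := Submodule.reflection_sub (by rw [hz, hz''])
  have hσinv : ∀ p, σ (σ p) = p := fun p => Submodule.reflection_reflection _ p
  have hσz'' : σ z'' = z := by
    conv_lhs => rw [← hσz]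
    exact hσinv z
  have hsa : ∀ a b, ⟪σ a, b⟫ = ⟪a, σ b⟫ := by
    intro a b
    conv_lhs => rw [← hσinv b]
    exact σ.inner_map_map a (σ b)
  have hform : ∀ y, σ y = y - (2 * (⟪z - z'', y⟫ / ‖z - z''‖^2)) • (z - z'') := by
    intro y
    rw [hσdef]
    rw [Submodule.reflection_orthogonal_apply, Submodule.reflection_singleton_apply]
    simp only [RCLike.ofReal_real_eq_id, id_eq]
    rw [two_smul, two_mul]
    module
  have hwne : z - z'' ≠ 0 := sub_ne_zero.mpr hzz
  have hwpos : (0:ℝ) < ‖z - z''‖ := norm_pos_iff.mpr hwne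
  have hws : (0:ℝ) < ‖z - z''‖^2 := by positivity
  have hxw : ⟪x, z - z''⟫ ≤ 0 := by
    rw [inner_sub_right]
    linarith
  have hptw : ∀ y, 0 ≤ (K₁ ⟪x, y⟫ - K₁ ⟪σ x, y⟫) * (K₂ ⟪y, z''⟫ - K₂ ⟪y, z⟫) := by
    intro y
    have e1 : ⟪σ x, y⟫ = ⟪x, y⟫ - (2 * (⟪z - z'', y⟫ / ‖z - z''‖^2)) * ⟪x, z - z''⟫ := by
      rw [hsa x y, hform y, inner_sub_right, real_inner_smul_right]
    have e2 : ⟪y, z''⟫ - ⟪y, z⟫ = -⟪z - z'', y⟫ := by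
      rw [inner_sub_left, real_inner_comm z y, real_inner_comm z'' y]
      ring
    rcases le_or_gt 0 ⟪z - z'', y⟫ with hc | hc
    · have hq : 0 ≤ (⟪z - z'', y⟫ / ‖z - z''‖^2) * (-⟪x, z - z''⟫) := by
        rw [div_mul_eq_mul_div]
        exact div_nonneg (mul_nonneg hc (neg_nonneg.mpr hxw)) hws.le
      have f1 : K₁ ⟪x, y⟫ ≤ K₁ ⟪σ x, y⟫ := by
        apply h₁
        rw [e1]
        nlinarith [hq]
      have f2 : K₂ ⟪y, z''⟫ ≤ K₂ ⟪y, z⟫ := by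
        apply h₂
        linarith [e2]
      nlinarith [mul_nonneg (neg_nonneg.mpr (sub_nonpos.mpr f1)) (neg_nonneg.mpr (sub_nonpos.mpr f2))]
    · have hq : 0 ≤ (⟪z - z'', y⟫ / ‖z - z''‖^2) * ⟪x, z - z''⟫ := by
        rw [div_mul_eq_mul_div]
        refine div_nonneg ?_ hws.le
        nlinarith [mul_nonneg (neg_nonneg.mpr hc.le) (neg_nonneg.mpr hxw)]
      have f1 : K₁ ⟪σ x, y⟫ ≤ K₁ ⟪x, y⟫ := by
        apply h₁
        rw [e1]
        nlinarith [hq]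
      have f2 : K₂ ⟪y, z⟫ ≤ K₂ ⟪y, z''⟫ := by
        apply h₂
        linarith [e2]
      exact mul_nonneg (sub_nonneg.mpr f1) (sub_nonneg.mpr f2)
  -- change of variables under σ
  have hfun1 : (fun y => K₁ ⟪x, σ y⟫ * K₂ ⟪σ y, z⟫) = (fun y => K₁ ⟪σ x, y⟫ * K₂ ⟪y, z''⟫) := by
    funext y
    rw [← hsa x y, hsa y z, hσz]
  have hfun2 : (fun y => K₁ ⟪x, σ y⟫ * K₂ ⟪σ y, z''⟫) = (fun y => K₁ ⟪σ x, y⟫ * K₂ ⟪y, z⟫) := by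
    funext y
    rw [← hsa x y, hsa y z'', hσz'']
  have e3 : (∫ y in sphere (0 : EuclideanSpace ℝ (Fin (n+1))) 1,
      K₁ ⟪x, y⟫ * K₂ ⟪y, z⟫ ∂μH[(n:ℝ)])
      = ∫ y in sphere (0 : EuclideanSpace ℝ (Fin (n+1))) 1,
        K₁ ⟪σ x, y⟫ * K₂ ⟪y, z''⟫ ∂μH[(n:ℝ)] := by
    rw [← integral_comp_isometry (n:ℝ) σ (fun y => K₁ ⟪x, y⟫ * K₂ ⟪y, z⟫)]
    simp only [hfun1]
  have e4 : (∫ y in sphere (0 : EuclideanSpace ℝ (Fin (n+1))) 1,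
      K₁ ⟪x, y⟫ * K₂ ⟪y, z''⟫ ∂μH[(n:ℝ)])
      = ∫ y in sphere (0 : EuclideanSpace ℝ (Fin (n+1))) 1,
        K₁ ⟪σ x, y⟫ * K₂ ⟪y, z⟫ ∂μH[(n:ℝ)] := by
    rw [← integral_comp_isometry (n:ℝ) σ (fun y => K₁ ⟪x, y⟫ * K₂ ⟪y, z''⟫)]
    simp only [hfun2]
  have hint : ∀ a b : EuclideanSpace ℝ (Fin (n+1)),
      Integrable (fun y => K₁ ⟪a, y⟫ * K₂ ⟪y, b⟫)
        (μH[(n:ℝ)].restrict (sphere (0 : EuclideanSpace ℝ (Fin (n+1))) 1)) :=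
    fun a b => integrable_prod n K₁ K₂ h₁ h₂ a b
  have hnn : 0 ≤ ∫ y in sphere (0 : EuclideanSpace ℝ (Fin (n+1))) 1,
      (K₁ ⟪x, y⟫ - K₁ ⟪σ x, y⟫) * (K₂ ⟪y, z''⟫ - K₂ ⟪y, z⟫) ∂μH[(n:ℝ)] :=
    setIntegral_nonneg hms (fun y _ => hptw y)
  have hexp : (∫ y in sphere (0 : EuclideanSpace ℝ (Fin (n+1))) 1,
      (K₁ ⟪x, y⟫ - K₁ ⟪σ x, y⟫) * (K₂ ⟪y, z''⟫ - K₂ ⟪y, z⟫) ∂μH[(n:ℝ)])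
      = (∫ y in sphere (0 : EuclideanSpace ℝ (Fin (n+1))) 1,
          K₁ ⟪x, y⟫ * K₂ ⟪y, z''⟫ ∂μH[(n:ℝ)])
        - (∫ y in sphere (0 : EuclideanSpace ℝ (Fin (n+1))) 1,
          K₁ ⟪x, y⟫ * K₂ ⟪y, z⟫ ∂μH[(n:ℝ)])
        - ((∫ y in sphere (0 : EuclideanSpace ℝ (Fin (n+1))) 1,
          K₁ ⟪σ x, y⟫ * K₂ ⟪y, z''⟫ ∂μH[(n:ℝ)])
        - (∫ y in sphere (0 : EuclideanSpace ℝ (Fin (n+1))) 1,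
          K₁ ⟪σ x, y⟫ * K₂ ⟪y, z⟫ ∂μH[(n:ℝ)])) := by
    have hfe : (fun y => (K₁ ⟪x, y⟫ - K₁ ⟪σ x, y⟫) * (K₂ ⟪y, z''⟫ - K₂ ⟪y, z⟫))
        = fun y => (K₁ ⟪x, y⟫ * K₂ ⟪y, z''⟫ - K₁ ⟪x, y⟫ * K₂ ⟪y, z⟫)
          - (K₁ ⟪σ x, y⟫ * K₂ ⟪y, z''⟫ - K₁ ⟪σ x, y⟫ * K₂ ⟪y, z⟫) := by
      funext y
      ring
    have hI1 : Integrable (fun y => K₁ ⟪x, y⟫ * K₂ ⟪y, z''⟫ - K₁ ⟪x, y⟫ * K₂ ⟪y, z⟫)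
        (μH[(n:ℝ)].restrict (sphere (0 : EuclideanSpace ℝ (Fin (n+1))) 1)) :=
      (hint x z'').sub (hint x z)
    have hI2 : Integrable (fun y => K₁ ⟪σ x, y⟫ * K₂ ⟪y, z''⟫ - K₁ ⟪σ x, y⟫ * K₂ ⟪y, z⟫)
        (μH[(n:ℝ)].restrict (sphere (0 : EuclideanSpace ℝ (Fin (n+1))) 1)) :=
      (hint (σ x) z'').sub (hint (σ x) z)
    rw [hfe, integral_sub hI1 hI2,
      integral_sub (hint x z'') (hint x z), integral_sub (hint (σ x) z'') (hint (σ x) z)]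
  rw [hexp] at hnn
  linarith [hnn, e3, e4]

end SphericalConvAux

open SphericalConvAux in
/-- If `k₁` and `k₂` are increasing on `[-1,1]`, then their spherical convolution
`(k₁ * k₂)(t) = ∫_{Sⁿ} k₁(x·y) k₂(y·z) dμ(y)` (for `x·z = t`) is increasing on `[-1,1]`. -/
theorem stmt_0 (n : ℕ) (k₁ k₂ : ℝ → ℝ)
    (h₁ : MonotoneOn k₁ (Icc (-1 : ℝ) 1)) (h₂ : MonotoneOn k₂ (Icc (-1 : ℝ) 1))
    (x z x' z' : EuclideanSpace ℝ (Fin (n + 1)))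
    (hx : x ∈ sphere (0 : EuclideanSpace ℝ (Fin (n + 1))) 1)
    (hz : z ∈ sphere (0 : EuclideanSpace ℝ (Fin (n + 1))) 1)
    (hx' : x' ∈ sphere (0 : EuclideanSpace ℝ (Fin (n + 1))) 1)
    (hz' : z' ∈ sphere (0 : EuclideanSpace ℝ (Fin (n + 1))) 1)
    (ht : ⟪x, z⟫ ≤ ⟪x', z'⟫) :
    (∫ y in sphere (0 : EuclideanSpace ℝ (Fin (n + 1))) 1,
        k₁ ⟪x, y⟫ * k₂ ⟪y, z⟫ ∂μH[(n : ℝ)]) ≤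
      ∫ y in sphere (0 : EuclideanSpace ℝ (Fin (n + 1))) 1,
        k₁ ⟪x', y⟫ * k₂ ⟪y, z'⟫ ∂μH[(n : ℝ)] := by
  have hms : MeasurableSet (sphere (0 : EuclideanSpace ℝ (Fin (n+1))) 1) :=
    isClosed_sphere.measurableSet
  have hx1 : ‖x‖ = 1 := by simpa [mem_sphere_iff_norm] using hx
  have hz1 : ‖z‖ = 1 := by simpa [mem_sphere_iff_norm] using hz
  have hx'1 : ‖x'‖ = 1 := by simpa [mem_sphere_iff_norm] using hx'
  have hz'1 : ‖z'‖ = 1 := by simpa [mem_sphere_iff_norm] using hz'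
  -- clamped versions of the kernels
  set K₁ : ℝ → ℝ := fun t => k₁ (max (-1) (min t 1)) with hK₁def
  set K₂ : ℝ → ℝ := fun t => k₂ (max (-1) (min t 1)) with hK₂def
  have hclampmem : ∀ t : ℝ, max (-1) (min t 1) ∈ Icc (-1:ℝ) 1 := by
    intro t
    constructor
    · exact le_max_left _ _
    · exact max_le (by norm_num) (min_le_right _ _)
  have hK₁mono : Monotone K₁ := by
    intro s t hst
    exact h₁ (hclampmem s) (hclampmem t)
      (max_le_max le_rfl (min_le_min_right _ hst))
  have hK₂mono : Monotone K₂ := by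
    intro s t hst
    exact h₂ (hclampmem s) (hclampmem t)
      (max_le_max le_rfl (min_le_min_right _ hst))
  -- the integrals agree with the clamped versions
  have heq : ∀ a b : EuclideanSpace ℝ (Fin (n+1)), ‖a‖ = 1 → ‖b‖ = 1 →
      (∫ y in sphere (0 : EuclideanSpace ℝ (Fin (n+1))) 1,
        k₁ ⟪a, y⟫ * k₂ ⟪y, b⟫ ∂μH[(n:ℝ)])
      = ∫ y in sphere (0 : EuclideanSpace ℝ (Fin (n+1))) 1,
        K₁ ⟪a, y⟫ * K₂ ⟪y, b⟫ ∂μH[(n:ℝ)] := by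
    intro a b ha hb
    apply setIntegral_congr_fun hms
    intro y hy
    have hy1 : ‖y‖ = 1 := by simpa [mem_sphere_iff_norm] using hy
    have hb1 : |⟪a, y⟫| ≤ 1 := by
      have h := abs_real_inner_le_norm a y
      rwa [hy1, ha, mul_one] at h
    have hb2 : |⟪y, b⟫| ≤ 1 := by
      have h := abs_real_inner_le_norm y b
      rwa [hy1, hb, one_mul] at h
    have hcl : ∀ t : ℝ, |t| ≤ 1 → max (-1) (min t 1) = t := by
      intro t htt
      obtain ⟨l1, l2⟩ := abs_le.mp htt
      rw [min_eq_left l2, max_eq_right l1]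
    simp only [hK₁def, hK₂def, hcl _ hb1, hcl _ hb2]
  rw [heq x z hx1 hz1, heq x' z' hx'1 hz'1]
  -- move x' to x by a reflection
  set R := (Submodule.reflection ((ℝ ∙ (x' - x))ᗮ) :
    EuclideanSpace ℝ (Fin (n+1)) ≃ₗᵢ[ℝ] EuclideanSpace ℝ (Fin (n+1))) with hRdef
  have hRx : R x' = x := Submodule.reflection_sub (by rw [hx'1, hx1])
  have hz''1 : ‖R z'‖ = 1 := by rw [R.norm_map]; exact hz'1
  have ht' : ⟪x, z⟫ ≤ ⟪x, R z'⟫ := by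
    have hinner : ⟪x, R z'⟫ = ⟪x', z'⟫ := by
      rw [← hRx, R.inner_map_map]
    rw [hinner]
    exact ht
  have e5 : (∫ y in sphere (0 : EuclideanSpace ℝ (Fin (n+1))) 1,
      K₁ ⟪x', y⟫ * K₂ ⟪y, z'⟫ ∂μH[(n:ℝ)])
      = ∫ y in sphere (0 : EuclideanSpace ℝ (Fin (n+1))) 1,
        K₁ ⟪x, y⟫ * K₂ ⟪y, R z'⟫ ∂μH[(n:ℝ)] := by
    rw [← integral_comp_isometry (n:ℝ) R.symm (fun y => K₁ ⟪x', y⟫ * K₂ ⟪y, z'⟫)]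
    have hfun : (fun y => K₁ ⟪x', R.symm y⟫ * K₂ ⟪R.symm y, z'⟫)
        = fun y => K₁ ⟪x, y⟫ * K₂ ⟪y, R z'⟫ := by
      funext y
      rw [inner_symm_right R x' y, hRx]
      congr 1
      rw [← R.inner_map_map (R.symm y) z', R.apply_symm_apply]
    simp only [hfun]
  rw [e5]
  exact main_ineq n K₁ K₂ hK₁mono hK₂mono x z (R z') hx1 hz1 hz''1 ht'
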